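/- (Sufficient global optimality condition for quadratic minimization over the sphere.) Let M be a real symmetric n×n matrix, u ∈ ℝⁿ, and suppose x* ∈ ℝⁿ satisfies ‖x*‖₂ = 1 and, for some ν ∈ ℝ, M x* + u = ν x* with M − νI positive semidefinite. Then x* is a global minimizer of x ↦ (1/2) xᵀMx + ⟨u,x⟩ over the unit sphere: for every x with ‖x‖₂ = 1, (1/2) xᵀMx + ⟨u,x⟩ ≥ (1/2) x*ᵀMx* + ⟨u,x*⟩. -/

import Mathlib

open scoped RealInnerProductSpace
open Matrix

theorem sufficient_global_optimality (n : ℕ)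
    (M : Matrix (Fin n) (Fin n) ℝ) (hM : Mᵀ = M)
    (u xstar : EuclideanSpace ℝ (Fin n)) (hnorm : ‖xstar‖ = 1) (ν : ℝ)
    (heig : Matrix.toEuclideanLin M xstar + u = ν • xstar)
    (hpsd : (M - ν • (1 : Matrix (Fin n) (Fin n) ℝ)).PosSemidef) :
    ∀ x : EuclideanSpace ℝ (Fin n), ‖x‖ = 1 →
      (1 / 2) * ⟪xstar, Matrix.toEuclideanLin M xstar⟫ + ⟪u, xstar⟫ ≤
        (1 / 2) * ⟪x, Matrix.toEuclideanLin M x⟫ + ⟪u, x⟫ := by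
  intro x hx
  set x' : Fin n → ℝ := WithLp.equiv 2 _ x with hx'
  set s' : Fin n → ℝ := WithLp.equiv 2 _ xstar with hs'
  set u' : Fin n → ℝ := WithLp.equiv 2 _ u with hu'
  have hinner : ∀ a b : EuclideanSpace ℝ (Fin n),
      ⟪a, b⟫ = (WithLp.equiv 2 _ a) ⬝ᵥ (WithLp.equiv 2 _ b) := by
    intro a b
    rw [EuclideanSpace.inner_eq_star_dotProduct, star_trivial, dotProduct_comm]; rfl
  have hnx : x' ⬝ᵥ x' = 1 := by
    have := real_inner_self_eq_norm_sq x
    rw [hinner] at this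
    rw [this, hx]; ring
  have hns : s' ⬝ᵥ s' = 1 := by
    have := real_inner_self_eq_norm_sq xstar
    rw [hinner] at this
    rw [this, hnorm]; ring
  have heig' : M *ᵥ s' + u' = ν • s' := by
    have := congrArg (WithLp.equiv 2 (Fin n → ℝ)) heig
    simpa [hs', hu'] using this
  have hu'' : u' = ν • s' - M *ᵥ s' := by
    rw [← heig']; abel
  have hsym : ∀ a b : Fin n → ℝ, a ⬝ᵥ (M *ᵥ b) = b ⬝ᵥ (M *ᵥ a) := by
    intro a b
    rw [Matrix.dotProduct_mulVec, dotProduct_comm, ← Matrix.mulVec_transpose, hM]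
  have hp := hpsd.dotProduct_mulVec_nonneg (x' - s')
  rw [star_trivial] at hp
  have hexp : (x' - s') ⬝ᵥ ((M - ν • 1) *ᵥ (x' - s')) =
      x' ⬝ᵥ (M *ᵥ x') - 2 * (x' ⬝ᵥ (M *ᵥ s')) + s' ⬝ᵥ (M *ᵥ s')
        - ν * (x' ⬝ᵥ x') + 2 * ν * (x' ⬝ᵥ s') - ν * (s' ⬝ᵥ s') := by
    simp [Matrix.sub_mulVec, Matrix.mulVec_sub, sub_dotProduct,
      dotProduct_sub, Matrix.smul_mulVec, Matrix.one_mulVec,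
      dotProduct_smul, smul_eq_mul, hsym s' x', dotProduct_comm s' x']
    ring
  rw [hexp] at hp
  have hgoal : ∀ a b : EuclideanSpace ℝ (Fin n),
      ⟪a, Matrix.toEuclideanLin M b⟫ =
        (WithLp.equiv 2 _ a) ⬝ᵥ (M *ᵥ (WithLp.equiv 2 _ b)) := by
    intro a b
    rw [hinner]; simp
  rw [hgoal, hgoal, hinner, hinner, ← hx', ← hs', ← hu', hu'']
  simp only [sub_dotProduct, smul_dotProduct, smul_eq_mul]
  rw [dotProduct_comm (M *ᵥ s') x', dotProduct_comm (M *ᵥ s') s',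
    hsym x' s'] at *
  rw [dotProduct_comm s' x']
  rw [hnx] at hp
  rw [hns] at hp ⊢
  linarith [hp]
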